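/- On the open set U = {(x,y,s,t) ∈ ℝ⁴ : x > |y| > 0}, the 2-forms ω₊ = (dx∧(ds + y²dt) + dy∧(ds + x²dt))/(x+y)² and ω₋ = (dx∧(ds + y²dt) - dy∧(ds + x²dt))/(x-y)² are closed and non-degenerate, hence symplectic. -/

import Mathlib

/-!
STATEMENT 11: On U = {(x,y,s,t) ∈ ℝ⁴ : x > |y| > 0}, the 2-forms
ω₊ = (dx∧(ds+y²dt) + dy∧(ds+x²dt))/(x+y)² and ω₋ = (dx∧(ds+y²dt) - dy∧(ds+x²dt))/(x-y)²
are closed and non-degenerate (ω∧ω nowhere zero), hence symplectic.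

2-forms are represented by antisymmetric component matrices (coordinates 0=x, 1=y,
2=s, 3=t); closedness is the cocycle condition on partial derivatives; ω∧ω is (up to the
factor 2·dx∧dy∧ds∧dt) the Pfaffian ω₀₁ω₂₃ - ω₀₂ω₁₃ + ω₀₃ω₁₂.
-/

noncomputable section

def pd (i : Fin 4) (f : (Fin 4 → ℝ) → ℝ) (p : Fin 4 → ℝ) : ℝ :=
  fderiv ℝ f p (Pi.single i 1)

def U4 : Set (Fin 4 → ℝ) := {p | |p 1| < p 0 ∧ 0 < |p 1|}

/-- Components of ω₊. -/
def omegaP (p : Fin 4 → ℝ) : Matrix (Fin 4) (Fin 4) ℝ :=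
  !![0, 0, 1/(p 0 + p 1)^2, (p 1)^2/(p 0 + p 1)^2;
     0, 0, 1/(p 0 + p 1)^2, (p 0)^2/(p 0 + p 1)^2;
     -(1/(p 0 + p 1)^2), -(1/(p 0 + p 1)^2), 0, 0;
     -((p 1)^2/(p 0 + p 1)^2), -((p 0)^2/(p 0 + p 1)^2), 0, 0]

/-- Components of ω₋. -/
def omegaM (p : Fin 4 → ℝ) : Matrix (Fin 4) (Fin 4) ℝ :=
  !![0, 0, 1/(p 0 - p 1)^2, (p 1)^2/(p 0 - p 1)^2;
     0, 0, -(1/(p 0 - p 1)^2), -((p 0)^2/(p 0 - p 1)^2);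
     -(1/(p 0 - p 1)^2), 1/(p 0 - p 1)^2, 0, 0;
     -((p 1)^2/(p 0 - p 1)^2), (p 0)^2/(p 0 - p 1)^2, 0, 0]

def pr (i : Fin 4) : (Fin 4 → ℝ) →L[ℝ] ℝ := ContinuousLinearMap.proj i

lemma hasF_coord (p : Fin 4 → ℝ) (i : Fin 4) :
    HasFDerivAt (fun q : Fin 4 → ℝ => q i) (pr i) p :=
  (ContinuousLinearMap.proj i : (Fin 4 → ℝ) →L[ℝ] ℝ).hasFDerivAt

lemma hasF_sq (p : Fin 4 → ℝ) (a : Fin 4) :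
    HasFDerivAt (fun q : Fin 4 → ℝ => (q a)^2) ((2 * p a) • pr a) p := by
  have := (hasF_coord p a).mul (hasF_coord p a)
  simp only [Pi.mul_def] at this
  simp only [pow_two]
  refine this.congr_fderiv ?_
  ext w
  simp
  ring

lemma pd_div (p : Fin 4 → ℝ) (n v : (Fin 4 → ℝ) → ℝ)
    (N V : (Fin 4 → ℝ) →L[ℝ] ℝ) (hn : HasFDerivAt n N p) (hv : HasFDerivAt v V p)
    (h : v p ≠ 0) (i : Fin 4) :
    fderiv ℝ (fun q => n q / (v q)^2) p (Pi.single i 1) =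
      (N (Pi.single i 1) * (v p)^2 - n p * (2 * v p * V (Pi.single i 1))) / ((v p)^2)^2 := by
  have hv2 : HasFDerivAt (fun q => (v q)^2) ((2 * v p) • V) p := by
    have := hv.mul hv
    simp only [Pi.mul_def] at this
    simp only [pow_two]
    refine this.congr_fderiv ?_
    ext w
    simp
    ring
  have hinv : HasFDerivAt (fun q => ((v q)^2)⁻¹)
      ((-(((v p)^2)^2)⁻¹) • ((2 * v p) • V)) p := by
    have := (hasDerivAt_inv (pow_ne_zero 2 h)).comp_hasFDerivAt p hv2
    simp only [Function.comp_def] at this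
    convert this using 1
  have hm := hn.mul hinv
  have heq : fderiv ℝ (fun q => n q * ((v q)^2)⁻¹) p = _ := hm.fderiv
  simp only [div_eq_mul_inv, heq]
  simp
  field_simp
  ring

def NP (q : Fin 4 → ℝ) : Matrix (Fin 4) (Fin 4) ℝ :=
  !![0,0,1,(q 1)^2; 0,0,1,(q 0)^2; -1,-1,0,0; -(q 1)^2,-(q 0)^2,0,0]

def NM (q : Fin 4 → ℝ) : Matrix (Fin 4) (Fin 4) ℝ :=
  !![0,0,1,(q 1)^2; 0,0,-1,-(q 0)^2; -1,1,0,0; -(q 1)^2,(q 0)^2,0,0]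

def DNP (p : Fin 4 → ℝ) : Matrix (Fin 4) (Fin 4) ((Fin 4 → ℝ) →L[ℝ] ℝ) :=
  !![0,0,0,(2*p 1) • pr 1; 0,0,0,(2*p 0) • pr 0; 0,0,0,0;
     -((2*p 1) • pr 1), -((2*p 0) • pr 0),0,0]

def DNM (p : Fin 4 → ℝ) : Matrix (Fin 4) (Fin 4) ((Fin 4 → ℝ) →L[ℝ] ℝ) :=
  !![0,0,0,(2*p 1) • pr 1; 0,0,0,-((2*p 0) • pr 0); 0,0,0,0;
     -((2*p 1) • pr 1), (2*p 0) • pr 0,0,0]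

lemma omegaP_eq (q : Fin 4 → ℝ) (j k : Fin 4) :
    omegaP q j k = NP q j k / (q 0 + q 1)^2 := by
  fin_cases j <;> fin_cases k <;> simp [omegaP, NP, neg_div, Matrix.vecHead, Matrix.vecTail]

lemma omegaM_eq (q : Fin 4 → ℝ) (j k : Fin 4) :
    omegaM q j k = NM q j k / (q 0 - q 1)^2 := by
  fin_cases j <;> fin_cases k <;> simp [omegaM, NM, neg_div, Matrix.vecHead, Matrix.vecTail]

lemma hNP (p : Fin 4 → ℝ) (j k : Fin 4) :
    HasFDerivAt (fun q => NP q j k) (DNP p j k) p := by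
  fin_cases j <;> fin_cases k <;>
    simp only [NP, DNP, Matrix.cons_val', Matrix.cons_val_zero, Matrix.cons_val_one,
      Matrix.head_cons, Matrix.empty_val', Matrix.cons_val_fin_one, Matrix.head_fin_const,
      Matrix.cons_val_two, Matrix.cons_val_three, Matrix.tail_cons, Fin.isValue] <;>
    first
      | exact hasFDerivAt_const _ _
      | exact hasF_sq p 0
      | exact hasF_sq p 1
      | exact (hasF_sq p 0).neg
      | exact (hasF_sq p 1).neg

lemma hNM (p : Fin 4 → ℝ) (j k : Fin 4) :
    HasFDerivAt (fun q => NM q j k) (DNM p j k) p := by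
  fin_cases j <;> fin_cases k <;>
    simp only [NM, DNM, Matrix.cons_val', Matrix.cons_val_zero, Matrix.cons_val_one,
      Matrix.head_cons, Matrix.empty_val', Matrix.cons_val_fin_one, Matrix.head_fin_const,
      Matrix.cons_val_two, Matrix.cons_val_three, Matrix.tail_cons, Fin.isValue] <;>
    first
      | exact hasFDerivAt_const _ _
      | exact hasF_sq p 0
      | exact hasF_sq p 1
      | exact (hasF_sq p 0).neg
      | exact (hasF_sq p 1).neg

lemma pdP (p : Fin 4 → ℝ) (h : p 0 + p 1 ≠ 0) (i j k : Fin 4) :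
    pd i (fun q => omegaP q j k) p =
      (DNP p j k (Pi.single i 1) * (p 0 + p 1)^2
        - NP p j k * (2 * (p 0 + p 1) * ((Pi.single i 1 : Fin 4 → ℝ) 0 + (Pi.single i 1 : Fin 4 → ℝ) 1)))
        / ((p 0 + p 1)^2)^2 := by
  have hv : HasFDerivAt (fun q : Fin 4 → ℝ => q 0 + q 1) (pr 0 + pr 1) p :=
    (hasF_coord p 0).add (hasF_coord p 1)
  have := pd_div p (fun q => NP q j k) (fun q => q 0 + q 1) (DNP p j k) (pr 0 + pr 1)
    (hNP p j k) hv h i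
  rw [pd]
  simp only [omegaP_eq]
  rw [this]
  simp [pr]

lemma pdM (p : Fin 4 → ℝ) (h : p 0 - p 1 ≠ 0) (i j k : Fin 4) :
    pd i (fun q => omegaM q j k) p =
      (DNM p j k (Pi.single i 1) * (p 0 - p 1)^2
        - NM p j k * (2 * (p 0 - p 1) * ((Pi.single i 1 : Fin 4 → ℝ) 0 - (Pi.single i 1 : Fin 4 → ℝ) 1)))
        / ((p 0 - p 1)^2)^2 := by
  have hv : HasFDerivAt (fun q : Fin 4 → ℝ => q 0 - q 1) (pr 0 - pr 1) p :=
    (hasF_coord p 0).sub (hasF_coord p 1)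
  have := pd_div p (fun q => NM q j k) (fun q => q 0 - q 1) (DNM p j k) (pr 0 - pr 1)
    (hNM p j k) hv h i
  rw [pd]
  simp only [omegaM_eq]
  rw [this]
  simp [pr]

lemma U4_facts (p : Fin 4 → ℝ) (hp : p ∈ U4) :
    p 0 + p 1 ≠ 0 ∧ p 0 - p 1 ≠ 0 ∧ (p 1)^2 < (p 0)^2 := by
  obtain ⟨h1, h2⟩ := hp
  have ha : -(p 0) < p 1 ∧ p 1 < p 0 := abs_lt.mp h1
  refine ⟨by nlinarith [ha.1, ha.2], by nlinarith [ha.1, ha.2], ?_⟩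
  have : |p 1|^2 < (p 0)^2 := by nlinarith [abs_nonneg (p 1)]
  simpa [sq_abs] using this

set_option maxHeartbeats 4000000 in
lemma closedP (p : Fin 4 → ℝ) (hp : p ∈ U4) (i j k : Fin 4) :
      pd i (fun q => omegaP q j k) p + pd j (fun q => omegaP q k i) p
        + pd k (fun q => omegaP q i j) p = 0 := by
  obtain ⟨h1, h2, h3⟩ := U4_facts p hp
  rw [pdP p h1 i j k, pdP p h1 j k i, pdP p h1 k i j]
  fin_cases i <;> fin_cases j <;> fin_cases k <;>
    · simp only [DNP, NP, pr, Matrix.cons_val_zero, Matrix.cons_val_one, Matrix.head_cons,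
        Matrix.cons_val_two, Matrix.cons_val_three, Matrix.tail_cons, Matrix.cons_val',
        Matrix.empty_val', Matrix.cons_val_fin_one, Matrix.head_fin_const,
        ContinuousLinearMap.zero_apply, ContinuousLinearMap.smul_apply,
        ContinuousLinearMap.neg_apply, ContinuousLinearMap.proj_apply, smul_eq_mul]
      norm_num [Pi.single_apply, Fin.ext_iff]
      try field_simp
      try ring

set_option maxHeartbeats 4000000 in
lemma closedM (p : Fin 4 → ℝ) (hp : p ∈ U4) (i j k : Fin 4) :
      pd i (fun q => omegaM q j k) p + pd j (fun q => omegaM q k i) p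
        + pd k (fun q => omegaM q i j) p = 0 := by
  obtain ⟨h1, h2, h3⟩ := U4_facts p hp
  rw [pdM p h2 i j k, pdM p h2 j k i, pdM p h2 k i j]
  fin_cases i <;> fin_cases j <;> fin_cases k <;>
    · simp only [DNM, NM, pr, Matrix.cons_val_zero, Matrix.cons_val_one, Matrix.head_cons,
        Matrix.cons_val_two, Matrix.cons_val_three, Matrix.tail_cons, Matrix.cons_val',
        Matrix.empty_val', Matrix.cons_val_fin_one, Matrix.head_fin_const,
        ContinuousLinearMap.zero_apply, ContinuousLinearMap.smul_apply,
        ContinuousLinearMap.neg_apply, ContinuousLinearMap.proj_apply, smul_eq_mul]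
      norm_num [Pi.single_apply, Fin.ext_iff]
      try field_simp
      try ring

lemma nondegP (p : Fin 4 → ℝ) (hp : p ∈ U4) :
      omegaP p 0 1 * omegaP p 2 3 - omegaP p 0 2 * omegaP p 1 3
        + omegaP p 0 3 * omegaP p 1 2 ≠ 0 := by
  obtain ⟨h1, h2, h3⟩ := U4_facts p hp
  simp only [omegaP, Matrix.cons_val_zero, Matrix.cons_val_one, Matrix.head_cons,
    Matrix.cons_val_two, Matrix.cons_val_three, Matrix.tail_cons, Matrix.cons_val',
    Matrix.empty_val', Matrix.cons_val_fin_one, Matrix.head_fin_const, Matrix.of_apply]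
  intro h
  field_simp at h
  have hw : (0:ℝ) < (p 0 + p 1)^2 := by positivity
  nlinarith [mul_pos (sub_pos.mpr h3) (mul_pos hw hw)]

lemma nondegM (p : Fin 4 → ℝ) (hp : p ∈ U4) :
      omegaM p 0 1 * omegaM p 2 3 - omegaM p 0 2 * omegaM p 1 3
        + omegaM p 0 3 * omegaM p 1 2 ≠ 0 := by
  obtain ⟨h1, h2, h3⟩ := U4_facts p hp
  simp only [omegaM, Matrix.cons_val_zero, Matrix.cons_val_one, Matrix.head_cons,
    Matrix.cons_val_two, Matrix.cons_val_three, Matrix.tail_cons, Matrix.cons_val',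
    Matrix.empty_val', Matrix.cons_val_fin_one, Matrix.head_fin_const, Matrix.of_apply]
  intro h
  field_simp at h
  have hw : (0:ℝ) < (p 0 - p 1)^2 := by positivity
  nlinarith [mul_pos (sub_pos.mpr h3) (mul_pos hw hw)]

theorem stmt11 :
    (∀ p ∈ U4, ∀ i j k : Fin 4,
      pd i (fun q => omegaP q j k) p + pd j (fun q => omegaP q k i) p
        + pd k (fun q => omegaP q i j) p = 0) ∧
    (∀ p ∈ U4, ∀ i j k : Fin 4,
      pd i (fun q => omegaM q j k) p + pd j (fun q => omegaM q k i) p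
        + pd k (fun q => omegaM q i j) p = 0) ∧
    (∀ p ∈ U4,
      omegaP p 0 1 * omegaP p 2 3 - omegaP p 0 2 * omegaP p 1 3
        + omegaP p 0 3 * omegaP p 1 2 ≠ 0) ∧
    (∀ p ∈ U4,
      omegaM p 0 1 * omegaM p 2 3 - omegaM p 0 2 * omegaM p 1 3
        + omegaM p 0 3 * omegaM p 1 2 ≠ 0) := ⟨closedP, closedM, nondegP, nondegM⟩

end
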